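/- Let I ⊆ S be a monomial ideal and c = (c_1,…,c_n) a vector of non-negative integers. If {u_1,…,u_m} and {v_1,…,v_r} are two (not necessarily minimal) sets of monomials each of which generates I, then the ideal generated by those u_i that are c-bounded equals the ideal generated by those v_j that are c-bounded. In particular, the ideal I^{≤c} generated by the c-bounded monomials among any monomial generating set of I is well defined, independent of the chosen generating set. -/
import Mathlib

open MvPolynomial

lemma aux_le {K : Type*} [Field K] {n m r : ℕ} (c : Fin n → ℕ)
    (u : Fin m → (Fin n →₀ ℕ)) (v : Fin r → (Fin n →₀ ℕ))
    (h : Ideal.span ((fun a : Fin n →₀ ℕ => (monomial a (1 : K))) '' Set.range u) ≤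
         Ideal.span ((fun a : Fin n →₀ ℕ => (monomial a (1 : K))) '' Set.range v)) :
    Ideal.span ((fun a : Fin n →₀ ℕ => (monomial a (1 : K))) ''
        {a | (∃ i, u i = a) ∧ ∀ k, a k ≤ c k}) ≤
    Ideal.span ((fun a : Fin n →₀ ℕ => (monomial a (1 : K))) ''
        {a | (∃ j, v j = a) ∧ ∀ k, a k ≤ c k}) := by
  rw [Ideal.span_le]
  rintro _ ⟨a, ⟨⟨i, hi⟩, hb⟩, rfl⟩
  have ha : (monomial a (1 : K)) ∈
      Ideal.span ((fun a : Fin n →₀ ℕ => (monomial a (1 : K))) '' Set.range v) := by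
    apply h
    exact Ideal.subset_span ⟨a, ⟨i, hi⟩, rfl⟩
  rw [mem_ideal_span_monomial_image] at ha
  have hsupp : a ∈ (monomial a (1 : K)).support := by
    rw [mem_support_iff, coeff_monomial, if_pos rfl]; exact one_ne_zero
  obtain ⟨s, ⟨j, hj⟩, hs⟩ := ha a hsupp
  have : (monomial a (1 : K)) ∈ Ideal.span ((fun a : Fin n →₀ ℕ => (monomial a (1 : K))) ''
      {a | (∃ j, v j = a) ∧ ∀ k, a k ≤ c k}) := by
    rw [mem_ideal_span_monomial_image]
    intro xi hxi
    have : xi = a := by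
      symm; simpa [mem_support_iff, coeff_monomial] using hxi
    subst this
    exact ⟨s, ⟨⟨j, hj⟩, fun k => le_trans (hs k) (hb k)⟩, hs⟩
  exact this

theorem stmt_0 {K : Type*} [Field K] {n m r : ℕ} (c : Fin n → ℕ)
    (u : Fin m → (Fin n →₀ ℕ)) (v : Fin r → (Fin n →₀ ℕ))
    (h : Ideal.span ((fun a : Fin n →₀ ℕ => (monomial a (1 : K))) '' Set.range u) =
         Ideal.span ((fun a : Fin n →₀ ℕ => (monomial a (1 : K))) '' Set.range v)) :
    Ideal.span ((fun a : Fin n →₀ ℕ => (monomial a (1 : K))) ''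
        {a | (∃ i, u i = a) ∧ ∀ k, a k ≤ c k}) =
    Ideal.span ((fun a : Fin n →₀ ℕ => (monomial a (1 : K))) ''
        {a | (∃ j, v j = a) ∧ ∀ k, a k ≤ c k}) :=
  le_antisymm (aux_le c u v h.le) (aux_le c v u h.ge)
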